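/- Let p be a prime, d ≥ 1 an integer, and Λ := ℤ_p[[X_1, …, X_d]] the ring of formal power series in d variables over the ring ℤ_p of p-adic integers. For n ≥ 0 let I_n ⊆ Λ be the ideal generated by the elements (1 + X_i)^{p^n} − 1 for i = 1, …, d. Let f ∈ Λ with f ∉ pΛ, let r ≥ 1, and let N be a Λ-module admitting a surjective Λ-module homomorphism (Λ/(f))^r → N. Then for every integer ν ≥ 1 there exists a constant C ≥ 0 such that for all n ≥ 0 the quotient module N/(p^ν N + I_n N) is finite of cardinality at most p^{C·p^{n(d−1)}}. -/

import Mathlib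

open Finset MvPowerSeries

namespace Stmt17Aux



/-- geometric digit bound -/
lemma geom_lt (Q : ℕ) (hQ : 0 < Q) (c : ℕ → ℕ) (hc : ∀ j, c j < Q) :
    ∀ m : ℕ, ∑ j ∈ Finset.range m, c j * Q ^ j < Q ^ m := by
  intro m
  induction m with
  | zero => simp
  | succ m ih =>
      rw [Finset.sum_range_succ, pow_succ]
      calc ∑ j ∈ Finset.range m, c j * Q ^ j + c m * Q ^ m
          < Q ^ m + c m * Q ^ m := by omega
        _ = (c m + 1) * Q ^ m := by ring
        _ ≤ Q * Q ^ m := Nat.mul_le_mul_right _ (hc m)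
        _ = Q ^ m * Q := by ring

lemma key_ltN (Q d i : ℕ) (a c : ℕ → ℕ) (hQ : 0 < Q) (hid : i < d)
    (ha : ∀ j, a j < Q) (hc : ∀ j, c j < Q) (hi : a i < c i)
    (hagree : ∀ j, i < j → a j = c j) :
    ∑ j ∈ Finset.range d, a j * Q ^ j < ∑ j ∈ Finset.range d, c j * Q ^ j := by
  have hsplit : ∀ e : ℕ → ℕ, ∑ j ∈ Finset.range d, e j * Q ^ j
      = ∑ j ∈ Finset.range (i+1), e j * Q ^ j + ∑ j ∈ Finset.Ico (i+1) d, e j * Q ^ j := by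
    intro e
    rw [Finset.range_eq_Ico, ← Finset.sum_Ico_consecutive _ (Nat.zero_le (i+1)) hid, Finset.range_eq_Ico]
  rw [hsplit a, hsplit c]
  have htail : ∑ j ∈ Finset.Ico (i+1) d, a j * Q ^ j = ∑ j ∈ Finset.Ico (i+1) d, c j * Q ^ j := by
    refine Finset.sum_congr rfl fun j hj => ?_
    rw [hagree j (by exact (Finset.mem_Ico.1 hj).1)]
  rw [htail]
  have hhead : ∑ j ∈ Finset.range (i+1), a j * Q ^ j < ∑ j ∈ Finset.range (i+1), c j * Q ^ j := by
    rw [Finset.sum_range_succ, Finset.sum_range_succ]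
    have h1 : ∑ j ∈ Finset.range i, a j * Q ^ j < Q ^ i := geom_lt Q hQ a ha i
    have h2 : (a i + 1) * Q ^ i ≤ c i * Q ^ i := Nat.mul_le_mul_right _ hi
    have h3 : 0 ≤ ∑ j ∈ Finset.range i, c j * Q ^ j := Nat.zero_le _
    nlinarith [h1, h2, h3]
  omega


lemma geom_lt' (Q : ℕ) (c : ℕ → ℕ) (hc : ∀ j, c j < Q) :
    ∀ m : ℕ, ∑ j ∈ Finset.range m, c j * Q ^ j < Q ^ m := by
  intro m
  induction m with
  | zero => simp
  | succ m ih =>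
      rw [Finset.sum_range_succ, pow_succ]
      have h2 : (c m + 1) * Q ^ m ≤ Q * Q ^ m := Nat.mul_le_mul_right _ (hc m)
      nlinarith [ih, h2]

/-- The box of multiexponents with all coordinates `< q`. -/
noncomputable def box (d q : ℕ) : Finset (Fin d →₀ ℕ) :=
  (Fintype.piFinset fun _ : Fin d => Finset.range q).map
    ⟨Finsupp.equivFunOnFinite.symm, Finsupp.equivFunOnFinite.symm.injective⟩

lemma mem_box {d q : ℕ} {e : Fin d →₀ ℕ} : e ∈ box d q ↔ ∀ i, e i < q := by
  constructor
  · rintro h i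
    simp only [box, Finset.mem_map, Fintype.mem_piFinset, Function.Embedding.coeFn_mk] at h
    obtain ⟨g, hg, rfl⟩ := h
    simpa using hg i
  · intro h
    simp only [box, Finset.mem_map, Fintype.mem_piFinset, Function.Embedding.coeFn_mk]
    exact ⟨Finsupp.equivFunOnFinite e, by simpa using h, by simp⟩

lemma card_box (d q : ℕ) : (box d q).card = q ^ d := by
  simp [box, Fintype.card_piFinset]

/-- Fin-indexed digit comparison lemma. -/
lemma key_lt {d : ℕ} (Q : ℕ) (hQ : 0 < Q) (a c : Fin d → ℕ) (i : Fin d)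
    (ha : ∀ j, a j < Q) (hc : ∀ j, c j < Q) (hi : a i < c i)
    (hagree : ∀ j, i < j → a j = c j) :
    ∑ j, a j * Q ^ (j : ℕ) < ∑ j, c j * Q ^ (j : ℕ) := by
  set a' : ℕ → ℕ := fun j => if h : j < d then a ⟨j, h⟩ else 0 with ha'
  set c' : ℕ → ℕ := fun j => if h : j < d then c ⟨j, h⟩ else 0 with hc'
  have hconva : ∑ j, a j * Q ^ (j : ℕ) = ∑ j ∈ Finset.range d, a' j * Q ^ j := by
    rw [← Fin.sum_univ_eq_sum_range (fun j => a' j * Q ^ j) d]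
    exact Finset.sum_congr rfl fun j _ => by simp [ha']
  have hconvc : ∑ j, c j * Q ^ (j : ℕ) = ∑ j ∈ Finset.range d, c' j * Q ^ j := by
    rw [← Fin.sum_univ_eq_sum_range (fun j => c' j * Q ^ j) d]
    exact Finset.sum_congr rfl fun j _ => by simp [hc']
  rw [hconva, hconvc]
  refine key_ltN Q d i a' c' hQ i.isLt ?_ ?_ ?_ ?_
  · intro j; by_cases h : j < d <;> simp [ha', h, ha _, hQ]
  · intro j; by_cases h : j < d <;> simp [hc', h, hc _, hQ]
  · simpa [ha', hc', i.isLt] using hi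
  · intro j hj
    by_cases h : j < d
    · have := hagree ⟨j, h⟩ (by simpa [Fin.lt_def] using hj)
      simpa [ha', hc', h] using this
    · simp [ha', hc', h]

lemma lex_lt {d : ℕ} (Q : ℕ) (hQ : 0 < Q) (c : Fin d → ℕ) (hc : ∀ i, c i < Q) :
    ∑ i, c i * Q ^ (i : ℕ) < Q ^ d := by
  set c' : ℕ → ℕ := fun j => if h : j < d then c ⟨j, h⟩ else 0 with hc'
  have hconvc : ∑ j, c j * Q ^ (j : ℕ) = ∑ j ∈ Finset.range d, c' j * Q ^ j := by
    rw [← Fin.sum_univ_eq_sum_range (fun j => c' j * Q ^ j) d]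
    exact Finset.sum_congr rfl fun j _ => by simp [hc']
  rw [hconvc]
  refine geom_lt' Q c' ?_ d
  intro j; by_cases h : j < d <;> simp [hc', h, hc _, hQ]

/-- weight function: graded lex encoding in base Q. -/
def wt (d Q : ℕ) (e : Fin d →₀ ℕ) : ℕ := (∑ i, e i) * Q ^ d + ∑ i, e i * Q ^ (i : ℕ)

lemma wt_add (d Q : ℕ) (x y : Fin d →₀ ℕ) : wt d Q (x + y) = wt d Q x + wt d Q y := by
  simp only [wt, Finsupp.coe_add, Pi.add_apply, add_mul, Finset.sum_add_distrib]
  ring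

lemma wt_le {d : ℕ} (q : ℕ) (hq : 0 < q) (e : Fin d →₀ ℕ) (he : ∀ i, e i < q) :
    wt d (2*q) e ≤ 2 * (d * q * (2*q) ^ d) := by
  have h1 : (∑ i, e i) ≤ d * q := by
    calc (∑ i, e i) ≤ (univ : Finset (Fin d)).card • q :=
          Finset.sum_le_card_nsmul _ _ q (fun i _ => le_of_lt (he i))
      _ = d * q := by simp [mul_comm]
  have h2 : ∑ i, e i * (2*q) ^ (i : ℕ) ≤ d * (q * (2*q) ^ d) := by
    calc ∑ i, e i * (2*q) ^ (i : ℕ) ≤ (univ : Finset (Fin d)).card • (q * (2*q)^d) := by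
          refine Finset.sum_le_card_nsmul _ _ _ (fun i _ => ?_)
          exact Nat.mul_le_mul (le_of_lt (he i))
            (Nat.pow_le_pow_right (by omega) (le_of_lt i.isLt))
      _ = d * (q * (2*q) ^ d) := by simp [mul_comm]
  have h3 : (∑ i, e i) * (2*q) ^ d ≤ (d * q) * (2*q) ^ d := Nat.mul_le_mul_right _ h1
  calc wt d (2*q) e ≤ (d*q) * (2*q)^d + d * (q * (2*q)^d) := Nat.add_le_add h3 h2
    _ = 2 * (d * q * (2*q) ^ d) := by ring



variable {A : Type*} [CommRing A] {d : ℕ}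

lemma C_dvd_of_forall_coeff_dvd (c : A) (g : MvPowerSeries (Fin d) A)
    (h : ∀ e, c ∣ MvPowerSeries.coeff e g) : (MvPowerSeries.C (σ := Fin d) (R := A) c) ∣ g := by
  refine ⟨(show MvPowerSeries (Fin d) A from (fun e => (h e).choose : (Fin d →₀ ℕ) → A)), ?_⟩
  ext e
  rw [MvPowerSeries.coeff_C_mul, MvPowerSeries.coeff_apply]
  exact (h e).choose_spec

lemma sub_trunc_mem (q : ℕ) (g : MvPowerSeries (Fin d) A) :
    g - ∑ e ∈ box d q, (MvPowerSeries.monomial e) (MvPowerSeries.coeff e g)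
      ∈ Ideal.span (Set.range fun i : Fin d =>
        ((MvPowerSeries.X i : MvPowerSeries (Fin d) A) ^ q)) := by
  classical
  set t : Fin d → MvPowerSeries (Fin d) A := fun i =>
    (fun e' => if ∀ j, j < i → e' j < q then
      MvPowerSeries.coeff (e' + Finsupp.single i q) g else 0) with ht
  have hsummand : ∀ (e : Fin d →₀ ℕ) (i : Fin d),
      MvPowerSeries.coeff e ((X i) ^ q * t i)
        = if q ≤ e i ∧ (∀ j, j < i → e j < q) then MvPowerSeries.coeff e g else 0 := by
    intro e i
    rw [MvPowerSeries.X_pow_eq, MvPowerSeries.coeff_monomial_mul, ite_and]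
    by_cases h1 : Finsupp.single i q ≤ e
    · have hle : q ≤ e i := by
        have := h1 i; simpa using this
      rw [if_pos h1, if_pos hle, one_mul, MvPowerSeries.coeff_apply]
      simp only [t]
      rw [show (e - Finsupp.single i q) + Finsupp.single i q = e from tsub_add_cancel_of_le h1]
      refine if_congr ?_ rfl rfl
      constructor
      · intro hh j hj
        have := hh j hj
        rwa [Finsupp.tsub_apply, Finsupp.single_apply, if_neg (ne_of_gt hj),
          Nat.sub_zero] at this
      · intro hh j hj
        rw [Finsupp.tsub_apply, Finsupp.single_apply, if_neg (ne_of_gt hj), Nat.sub_zero]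
        exact hh j hj
    · rw [if_neg h1, if_neg]
      intro hle
      exact h1 (by rwa [Finsupp.single_le_iff])
  have key : g - ∑ e ∈ box d q, (MvPowerSeries.monomial e) (MvPowerSeries.coeff e g)
      = ∑ i, (X i) ^ q * t i := by
    ext e
    rw [map_sub, map_sum, map_sum]
    by_cases hbox : ∀ i, e i < q
    · have htr : ∑ e' ∈ box d q,
          MvPowerSeries.coeff e ((MvPowerSeries.monomial e') (MvPowerSeries.coeff e' g))
          = MvPowerSeries.coeff e g := by
        rw [Finset.sum_eq_single_of_mem e (mem_box.2 hbox)]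
        · rw [MvPowerSeries.coeff_monomial_same]
        · intro e' _ hne
          rw [MvPowerSeries.coeff_monomial, if_neg (Ne.symm hne)]
      have hrhs : ∑ i, MvPowerSeries.coeff e ((X i) ^ q * t i) = 0 := by
        refine Finset.sum_eq_zero fun i _ => ?_
        rw [hsummand e i, if_neg]
        rintro ⟨h1, -⟩
        exact absurd h1 (not_le.2 (hbox i))
      rw [htr, hrhs, sub_self]
    · push_neg at hbox
      have hF : (univ.filter (fun i => q ≤ e i)).Nonempty := by
        obtain ⟨i, hi⟩ := hbox
        exact ⟨i, by simp [hi]⟩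
      set i₀ := (univ.filter (fun i => q ≤ e i)).min' hF with hi₀
      have hqi₀ : q ≤ e i₀ := by
        have := (univ.filter (fun i => q ≤ e i)).min'_mem hF
        simpa using this
      have hbelow : ∀ j, j < i₀ → e j < q := by
        intro j hj
        by_contra hc
        have : i₀ ≤ j := Finset.min'_le _ _ (by simp [not_lt.1 hc])
        omega
      have htr : ∑ e' ∈ box d q,
          MvPowerSeries.coeff e ((MvPowerSeries.monomial e') (MvPowerSeries.coeff e' g))
          = 0 := by
        refine Finset.sum_eq_zero fun e' he' => ?_
        rw [MvPowerSeries.coeff_monomial, if_neg]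
        rintro rfl
        exact absurd (mem_box.1 he' i₀) (not_lt.2 hqi₀)
      have hrhs : ∑ i, MvPowerSeries.coeff e ((X i) ^ q * t i)
          = MvPowerSeries.coeff e g := by
        rw [Finset.sum_eq_single_of_mem i₀ (Finset.mem_univ i₀)]
        · rw [hsummand e i₀, if_pos ⟨hqi₀, hbelow⟩]
        · intro i _ hne
          rw [hsummand e i, if_neg]
          rintro ⟨h1, h2⟩
          have hiF : i ∈ univ.filter (fun j => q ≤ e j) := by simp [h1]
          have : i₀ ≤ i := Finset.min'_le _ _ hiF
          have hlt : i₀ < i := lt_of_le_of_ne this (Ne.symm hne)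
          exact absurd (h2 i₀ hlt) (not_lt.2 hqi₀)
      rw [htr, hrhs, sub_zero]
  rw [key]
  exact Ideal.sum_mem _ fun i _ =>
    Ideal.mul_mem_right _ _ (Ideal.subset_span ⟨i, rfl⟩)



variable {p : ℕ} [Fact p.Prime]

lemma spanning {d : ℕ} (f : MvPowerSeries (Fin d) ℤ_[p]) (q : ℕ) (hq : 0 < q)
    (a : Fin d →₀ ℕ) (hunit : IsUnit (MvPowerSeries.coeff a f))
    (hmin : ∀ c : Fin d →₀ ℕ, (∀ i, c i < q) →
      ¬ ((p : ℤ_[p]) ∣ MvPowerSeries.coeff c f) → c ≠ a →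
      wt d (2*q) a < wt d (2*q) c) :
    ∀ e : Fin d →₀ ℕ, (∀ i, e i < q) →
      (MvPowerSeries.monomial e) (1 : ℤ_[p]) ∈
        (Submodule.span ℤ_[p] (Set.range
          fun s : {x : Fin d →₀ ℕ // x ∈ (box d q).filter (fun e' => ¬ a ≤ e')} =>
            (MvPowerSeries.monomial (s : Fin d →₀ ℕ)) (1 : ℤ_[p]))) ⊔
        (Ideal.span {(p : MvPowerSeries (Fin d) ℤ_[p])} ⊔ Ideal.span {f} ⊔
          Ideal.span (Set.range fun i : Fin d =>
            ((MvPowerSeries.X i : MvPowerSeries (Fin d) ℤ_[p]) ^ q))).restrictScalars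
          ℤ_[p] := by
  classical
  set J : Ideal (MvPowerSeries (Fin d) ℤ_[p]) :=
    Ideal.span {(p : MvPowerSeries (Fin d) ℤ_[p])} ⊔ Ideal.span {f} ⊔
      Ideal.span (Set.range fun i : Fin d =>
        ((MvPowerSeries.X i : MvPowerSeries (Fin d) ℤ_[p]) ^ q)) with hJ
  set M : Submodule ℤ_[p] (MvPowerSeries (Fin d) ℤ_[p]) :=
    Submodule.span ℤ_[p] (Set.range
      fun s : {x : Fin d →₀ ℕ // x ∈ (box d q).filter (fun e' => ¬ a ≤ e')} =>
        (MvPowerSeries.monomial (s : Fin d →₀ ℕ)) (1 : ℤ_[p])) with hM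
  set Tgt := M ⊔ J.restrictScalars ℤ_[p] with hTgt
  have hJmem : ∀ x ∈ J, x ∈ Tgt := fun x hx =>
    Submodule.mem_sup_right ((Submodule.restrictScalars_mem _ _ _).2 hx)
  set maxW := 2 * (d * q * (2*q) ^ d) with hmaxW
  suffices H : ∀ W : ℕ, ∀ e : Fin d →₀ ℕ, (∀ i, e i < q) →
      maxW - wt d (2*q) e ≤ W → (MvPowerSeries.monomial e) (1 : ℤ_[p]) ∈ Tgt by
    intro e he
    exact H maxW e he (Nat.sub_le _ _)
  intro W
  induction W using Nat.strong_induction_on with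
  | _ W ih =>
  intro e he hW
  by_cases hae : a ≤ e
  · -- the hard case
    set b := e - a with hb
    have hab : a + b = e := add_tsub_cancel_of_le hae
    set r : MvPowerSeries (Fin d) ℤ_[p] :=
      f * (MvPowerSeries.monomial b) 1 -
        (MvPowerSeries.monomial e) (MvPowerSeries.coeff a f) with hr
    have hfb : f * (MvPowerSeries.monomial b) 1 ∈ Tgt := by
      refine hJmem _ ?_
      rw [hJ]
      exact Ideal.mem_sup_left (Ideal.mem_sup_right
        (Ideal.mul_mem_right _ _ (Ideal.subset_span rfl)))
    have hcoeff : ∀ e', MvPowerSeries.coeff e' r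
        = (if b ≤ e' then MvPowerSeries.coeff (e' - b) f else 0)
          - (if e' = e then MvPowerSeries.coeff a f else 0) := by
      intro e'
      rw [hr, map_sub, MvPowerSeries.coeff_mul_monomial, MvPowerSeries.coeff_monomial]
      split <;> simp
    have htrunc : ∑ e' ∈ box d q,
        (MvPowerSeries.monomial e') (MvPowerSeries.coeff e' r) ∈ Tgt := by
      refine Submodule.sum_mem _ fun e' he' => ?_
      by_cases hdvd : (p : ℤ_[p]) ∣ MvPowerSeries.coeff e' r
      · obtain ⟨u, hu⟩ := hdvd
        refine hJmem _ ?_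
        have heq : (MvPowerSeries.monomial e') (MvPowerSeries.coeff e' r)
            = (p : MvPowerSeries (Fin d) ℤ_[p]) * (MvPowerSeries.monomial e') u := by
          ext e''
          rw [show (p : MvPowerSeries (Fin d) ℤ_[p]) = MvPowerSeries.C (σ := Fin d) (R := ℤ_[p]) (p : ℤ_[p])
            from (map_natCast (MvPowerSeries.C (σ := Fin d) (R := ℤ_[p])) p).symm]
          rw [MvPowerSeries.coeff_C_mul, MvPowerSeries.coeff_monomial,
            MvPowerSeries.coeff_monomial, hu]
          split <;> simp
        rw [heq, hJ]
        exact Ideal.mem_sup_left (Ideal.mem_sup_left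
          (Ideal.mul_mem_right _ _ (Ideal.subset_span rfl)))
      · have hne : MvPowerSeries.coeff e' r ≠ 0 := fun h0 => hdvd (h0 ▸ dvd_zero _)
        have h1 : b ≤ e' := by
          by_contra h1
          have h2 : e' ≠ e := by
            rintro rfl
            exact h1 (hab ▸ le_add_self)
          rw [hcoeff e', if_neg h1, if_neg h2, sub_zero] at hne
          exact hne rfl
        have h2 : e' ≠ e := by
          rintro rfl
          apply hne
          have hea : e' - b = a := by rw [← hab, add_tsub_cancel_right]
          rw [hcoeff e', if_pos h1, if_pos rfl, hea, sub_self]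
        have hcf : MvPowerSeries.coeff e' r = MvPowerSeries.coeff (e' - b) f := by
          rw [hcoeff e', if_pos h1, if_neg h2, sub_zero]
        have hc'b : (e' - b) + b = e' := tsub_add_cancel_of_le h1
        have hc'a : e' - b ≠ a := by
          intro hh
          exact h2 (by rw [← hc'b, hh, hab])
        have hc'box : ∀ i, (e' - b) i < q := by
          intro i
          have : (e' - b) i ≤ e' i := by
            rw [Finsupp.tsub_apply]
            exact Nat.sub_le _ _
          exact lt_of_le_of_lt this (mem_box.1 he' i)
        have hwlt : wt d (2*q) a < wt d (2*q) (e' - b) :=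
          hmin (e' - b) hc'box (by rw [← hcf]; exact hdvd) hc'a
        have hwe : wt d (2*q) e < wt d (2*q) e' := by
          rw [← hab, ← hc'b, wt_add, wt_add]
          omega
        have hwe'le : wt d (2*q) e' ≤ maxW := wt_le q hq e' (mem_box.1 he')
        have hrec : (MvPowerSeries.monomial e') (1 : ℤ_[p]) ∈ Tgt :=
          ih (maxW - wt d (2*q) e') (by omega) e' (mem_box.1 he') le_rfl
        have heq : (MvPowerSeries.monomial e') (MvPowerSeries.coeff e' r)
            = (MvPowerSeries.coeff e' r) • (MvPowerSeries.monomial e') 1 := by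
          rw [← map_smul, smul_eq_mul, mul_one]
        rw [heq]
        exact Submodule.smul_mem _ _ hrec
    have hrmem : r ∈ Tgt := by
      have hdecomp : r = (∑ e' ∈ box d q,
          (MvPowerSeries.monomial e') (MvPowerSeries.coeff e' r))
          + (r - ∑ e' ∈ box d q,
          (MvPowerSeries.monomial e') (MvPowerSeries.coeff e' r)) := by ring
      rw [hdecomp]
      refine Submodule.add_mem _ htrunc (hJmem _ ?_)
      rw [hJ]
      exact Ideal.mem_sup_right (sub_trunc_mem q r)
    have hme : (MvPowerSeries.monomial e) (MvPowerSeries.coeff a f) ∈ Tgt := by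
      have heq : (MvPowerSeries.monomial e) (MvPowerSeries.coeff a f)
          = f * (MvPowerSeries.monomial b) 1 - r := by
        rw [hr]; ring
      rw [heq]
      exact Submodule.sub_mem _ hfb hrmem
    obtain ⟨u, hu⟩ := hunit
    have heq : (MvPowerSeries.monomial e) (1 : ℤ_[p])
        = ((u⁻¹ : ℤ_[p]ˣ) : ℤ_[p]) • (MvPowerSeries.monomial e)
            (MvPowerSeries.coeff a f) := by
      rw [← map_smul, smul_eq_mul, ← hu]
      norm_cast
      simp
    rw [heq]
    exact Submodule.smul_mem _ _ hme
  · refine Submodule.mem_sup_left (Submodule.subset_span ?_)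
    exact ⟨⟨e, Finset.mem_filter.2 ⟨mem_box.2 he, hae⟩⟩, rfl⟩



variable {p : ℕ} [Fact p.Prime] {d : ℕ}

/-- `X i ^ (p^n)` lies in `(p) + I_n`. -/
lemma X_pow_mem (n : ℕ) (i : Fin d) :
    ((MvPowerSeries.X i : MvPowerSeries (Fin d) ℤ_[p]) ^ (p ^ n)) ∈
      Ideal.span {(p : MvPowerSeries (Fin d) ℤ_[p])} ⊔
        Ideal.span (Set.range fun i : Fin d =>
          ((1 + MvPowerSeries.X i) ^ (p ^ n) - 1 : MvPowerSeries (Fin d) ℤ_[p])) := by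
  set q := p ^ n with hqdef
  have hq : 0 < q := pow_pos (Nat.Prime.pos Fact.out) n
  have h1 : ((1 + MvPowerSeries.X i : MvPowerSeries (Fin d) ℤ_[p])) ^ q
      = ∑ k ∈ Finset.range (q + 1),
        (MvPowerSeries.X i : MvPowerSeries (Fin d) ℤ_[p]) ^ k * (q.choose k : ℕ) := by
    rw [add_comm, add_pow]
    exact Finset.sum_congr rfl fun k _ => by rw [one_pow, mul_one]
  have hq1 : q - 1 + 1 = q := Nat.succ_pred_eq_of_pos hq
  have key : ((MvPowerSeries.X i : MvPowerSeries (Fin d) ℤ_[p])) ^ q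
      = ((1 + MvPowerSeries.X i) ^ q - 1)
        - ∑ k ∈ Finset.range (q - 1),
            (MvPowerSeries.X i : MvPowerSeries (Fin d) ℤ_[p]) ^ (k+1) * (q.choose (k+1) : ℕ) := by
    rw [h1, Finset.sum_range_succ, Nat.choose_self, ← hq1, Finset.sum_range_succ']
    simp only [Nat.choose_zero_right, pow_zero, one_mul, Nat.cast_one, mul_one, hq1]
    ring
  rw [key]
  refine Submodule.sub_mem _ (Ideal.mem_sup_right (Ideal.subset_span ⟨i, rfl⟩)) ?_
  refine Ideal.mem_sup_left (Submodule.sum_mem _ fun k hk => ?_)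
  have hk1 : k + 1 ≠ q := by
    have := Finset.mem_range.1 hk
    omega
  have hdvd : p ∣ q.choose (k+1) :=
    Nat.Prime.dvd_choose_pow Fact.out (Nat.succ_ne_zero k) hk1
  exact Ideal.mem_span_singleton.2 ((Nat.cast_dvd_cast hdvd).mul_left _)

/-- selection of the minimal monomial of `f mod p`. -/
lemma exists_min_exponent (f : MvPowerSeries (Fin d) ℤ_[p])
    (hf : f ∉ Ideal.span {(p : MvPowerSeries (Fin d) ℤ_[p])}) :
    ∃ (D₀ : ℕ) (a : Fin d →₀ ℕ),
      ¬ ((p : ℤ_[p]) ∣ MvPowerSeries.coeff a f) ∧ (∑ i, a i) = D₀ ∧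
      (∀ q : ℕ, D₀ < q → ∀ c : Fin d →₀ ℕ, (∀ i, c i < q) →
        ¬ ((p : ℤ_[p]) ∣ MvPowerSeries.coeff c f) → c ≠ a →
        wt d (2*q) a < wt d (2*q) c) := by
  classical
  have hex : ∃ e, ¬ ((p : ℤ_[p]) ∣ MvPowerSeries.coeff e f) := by
    by_contra h
    push_neg at h
    refine hf (Ideal.mem_span_singleton.2 ?_)
    have := C_dvd_of_forall_coeff_dvd (p : ℤ_[p]) f h
    rwa [map_natCast] at this
  have hDex : ∃ m : ℕ, ∃ e : Fin d →₀ ℕ,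
      ¬ ((p : ℤ_[p]) ∣ MvPowerSeries.coeff e f) ∧ (∑ i, e i) = m :=
    ⟨∑ i, hex.choose i, hex.choose, hex.choose_spec, rfl⟩
  set D₀ := Nat.find hDex with hD₀def
  obtain ⟨e₀, he₀, hdeg₀⟩ := Nat.find_spec hDex
  have hD₀min : ∀ c : Fin d →₀ ℕ,
      ¬ ((p : ℤ_[p]) ∣ MvPowerSeries.coeff c f) → D₀ ≤ ∑ i, c i :=
    fun c hc => Nat.find_min' hDex ⟨c, hc, rfl⟩
  set T := (box d (D₀+1)).filter
    (fun e => ¬ ((p : ℤ_[p]) ∣ MvPowerSeries.coeff e f) ∧ (∑ i, e i) = D₀) with hTdef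
  have hdig : ∀ (e : Fin d →₀ ℕ), (∑ i, e i) = D₀ → ∀ i, e i ≤ D₀ := by
    intro e hdeg i
    have : e i ≤ ∑ j, e j := Finset.single_le_sum (fun j _ => Nat.zero_le _) (Finset.mem_univ i)
    omega
  have he₀T : e₀ ∈ T := by
    refine Finset.mem_filter.2 ⟨mem_box.2 fun i => ?_, he₀, hdeg₀⟩
    have := hdig e₀ hdeg₀ i
    omega
  obtain ⟨a, haT, hamin⟩ :=
    T.exists_min_image (fun e => ∑ i, e i * (D₀+1) ^ (i : ℕ)) ⟨e₀, he₀T⟩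
  have hpa : ¬ ((p : ℤ_[p]) ∣ MvPowerSeries.coeff a f) := (Finset.mem_filter.1 haT).2.1
  have hdega : (∑ i, a i) = D₀ := (Finset.mem_filter.1 haT).2.2
  have hadig : ∀ i, a i ≤ D₀ := hdig a hdega
  refine ⟨D₀, a, hpa, hdega, ?_⟩
  intro q hq c hcbox hpc hca
  have hdegc : D₀ ≤ ∑ i, c i := hD₀min c hpc
  rcases lt_or_eq_of_le hdegc with hlt | heq
  · -- strictly bigger degree
    have h1 : ∑ i, a i * (2*q) ^ (i : ℕ) < (2*q) ^ d :=
      lex_lt (2*q) (by omega) a (fun i => by have := hadig i; omega)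
    have h3 : wt d (2*q) a = D₀ * (2*q) ^ d + ∑ i, a i * (2*q) ^ (i : ℕ) := by
      rw [wt, hdega]
    have h4 : wt d (2*q) c ≥ (D₀ + 1) * (2*q) ^ d := by
      have : (D₀ + 1) * (2*q) ^ d ≤ (∑ i, c i) * (2*q) ^ d :=
        Nat.mul_le_mul_right _ hlt
      calc (D₀+1) * (2*q)^d ≤ (∑ i, c i) * (2*q)^d := this
        _ ≤ wt d (2*q) c := Nat.le_add_right _ _
    have h5 : (D₀ + 1) * (2*q) ^ d = D₀ * (2*q) ^ d + (2*q) ^ d := by ring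
    omega
  · -- equal degree
    have hcdig : ∀ i, c i ≤ D₀ := hdig c heq.symm
    have hcT : c ∈ T := by
      refine Finset.mem_filter.2 ⟨mem_box.2 fun i => ?_, hpc, heq.symm⟩
      have := hcdig i; omega
    have hne : ∃ i, a i ≠ c i := by
      by_contra h
      push_neg at h
      exact hca (Finsupp.ext fun i => (h i).symm)
    set F := Finset.univ.filter (fun i => a i ≠ c i) with hFdef
    have hFne : F.Nonempty := ⟨hne.choose, by simp [hFdef, hne.choose_spec]⟩
    set i := F.max' hFne with hidef
    have hiF : a i ≠ c i := by
      have := F.max'_mem hFne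
      simp only [hFdef, Finset.mem_filter] at this
      exact this.2
    have hagree : ∀ j, i < j → a j = c j := by
      intro j hj
      by_contra hcj
      have : j ≤ i := F.le_max' j (by simp [hFdef, hcj])
      exact absurd hj (not_lt.2 this)
    have hdir : a i < c i := by
      rcases lt_or_gt_of_ne hiF with h | h
      · exact h
      · exfalso
        have hk := key_lt (D₀+1) (Nat.succ_pos _) c a i
          (fun j => Nat.lt_succ_of_le (hcdig j)) (fun j => Nat.lt_succ_of_le (hadig j))
          h (fun j hj => (hagree j hj).symm)
        have hge := hamin c hcT
        omega
    have hk := key_lt (2*q) (by omega) a c i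
      (fun j => by have := hadig j; omega) (fun j => by have := hcdig j; omega)
      hdir hagree
    rw [wt, wt, hdega, ← heq]
    omega



variable {p : ℕ} [Fact p.Prime] {d : ℕ}

lemma bootstrap {M : Submodule ℤ_[p] (MvPowerSeries (Fin d) ℤ_[p])}
    {K : Ideal (MvPowerSeries (Fin d) ℤ_[p])}
    (h1 : ∀ gg : MvPowerSeries (Fin d) ℤ_[p], ∃ m ∈ M,
      gg - m ∈ Ideal.span {(p : MvPowerSeries (Fin d) ℤ_[p])} ⊔ K) :
    ∀ j : ℕ, ∀ gg : MvPowerSeries (Fin d) ℤ_[p], ∃ m ∈ M,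
      gg - m ∈ Ideal.span {(p : MvPowerSeries (Fin d) ℤ_[p]) ^ j} ⊔ K := by
  intro j
  induction j with
  | zero =>
      intro gg
      exact ⟨0, zero_mem _, Ideal.mem_sup_left
        (Ideal.mem_span_singleton.2 (by rw [pow_zero]; exact one_dvd _))⟩
  | succ j ihj =>
      intro gg
      obtain ⟨m, hmM, hmem⟩ := ihj gg
      obtain ⟨y, hy, k, hk, hyk⟩ := Submodule.mem_sup.1 hmem
      obtain ⟨z, rfl⟩ := Ideal.mem_span_singleton.1 hy
      obtain ⟨m', hm'M, hmem'⟩ := h1 z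
      obtain ⟨w, hw, k', hk', hwk'⟩ := Submodule.mem_sup.1 hmem'
      refine ⟨m + ((p : ℤ_[p]) ^ j) • m',
        Submodule.add_mem _ hmM (Submodule.smul_mem _ _ hm'M), ?_⟩
      obtain ⟨v, rfl⟩ := Ideal.mem_span_singleton.1 hw
      refine Submodule.mem_sup.2 ⟨(p : MvPowerSeries (Fin d) ℤ_[p]) ^ (j+1) * v,
        Ideal.mem_span_singleton.2 (dvd_mul_right _ _),
        (p : MvPowerSeries (Fin d) ℤ_[p]) ^ j * k' + k,
        K.add_mem (Ideal.mul_mem_left _ _ hk') hk, ?_⟩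
      have hsm : ((p : ℤ_[p]) ^ j) • m' = (p : MvPowerSeries (Fin d) ℤ_[p]) ^ j * m' := by
        rw [Algebra.smul_def, map_pow, map_natCast]
      rw [hsm]
      linear_combination hyk + (p : MvPowerSeries (Fin d) ℤ_[p]) ^ j * hwk'

lemma main_spanning (f : MvPowerSeries (Fin d) ℤ_[p]) (D₀ : ℕ) (a : Fin d →₀ ℕ)
    (hpa : ¬ ((p : ℤ_[p]) ∣ MvPowerSeries.coeff a f)) (hdega : (∑ i, a i) = D₀)
    (hmin : ∀ q : ℕ, D₀ < q → ∀ c : Fin d →₀ ℕ, (∀ i, c i < q) →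
      ¬ ((p : ℤ_[p]) ∣ MvPowerSeries.coeff c f) → c ≠ a →
      wt d (2*q) a < wt d (2*q) c)
    (hd : 1 ≤ d) (q : ℕ) (hq : 0 < q) (K : Ideal (MvPowerSeries (Fin d) ℤ_[p]))
    (hfK : f ∈ K)
    (hXK : Ideal.span (Set.range fun i : Fin d =>
        ((MvPowerSeries.X i : MvPowerSeries (Fin d) ℤ_[p]) ^ q)) ≤
      Ideal.span {(p : MvPowerSeries (Fin d) ℤ_[p])} ⊔ K) :
    ∃ S : Finset (Fin d →₀ ℕ), S.card ≤ D₀ * q ^ (d-1) ∧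
      ∀ gg : MvPowerSeries (Fin d) ℤ_[p],
        ∃ m ∈ Submodule.span ℤ_[p] (Set.range fun s : {x : Fin d →₀ ℕ // x ∈ S} =>
          (MvPowerSeries.monomial (s : Fin d →₀ ℕ)) (1 : ℤ_[p])),
        gg - m ∈ Ideal.span {(p : MvPowerSeries (Fin d) ℤ_[p])} ⊔ K := by
  classical
  have hfK' : Ideal.span {f} ≤ K := by
    rw [Ideal.span_le, Set.singleton_subset_iff]; exact hfK
  by_cases hDq : D₀ < q
  · -- refined case
    refine ⟨(box d q).filter (fun e' => ¬ a ≤ e'), ?_, ?_⟩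
    · -- cardinality
      have hadig : ∀ i, a i < q := by
        intro i
        have : a i ≤ ∑ j, a j :=
          Finset.single_le_sum (fun j _ => Nat.zero_le _) (Finset.mem_univ i)
        omega
      have hsub : (box d q).filter (fun e' => ¬ a ≤ e') ⊆
          Finset.univ.biUnion (fun i : Fin d => (box d q).filter (fun e => e i < a i)) := by
        intro e he
        obtain ⟨hbox, hnae⟩ := Finset.mem_filter.1 he
        rw [Finsupp.le_def] at hnae
        push_neg at hnae
        obtain ⟨i, hi⟩ := hnae
        exact Finset.mem_biUnion.2 ⟨i, Finset.mem_univ i,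
          Finset.mem_filter.2 ⟨hbox, hi⟩⟩
      have hbi : ∀ i : Fin d, ((box d q).filter (fun e => e i < a i)).card
          ≤ a i * q ^ (d-1) := by
        intro i
        have hcard : (Fintype.piFinset (fun j : Fin d =>
            if j = i then Finset.range (a i) else Finset.range q)).card
            = a i * q ^ (d-1) := by
          rw [Fintype.card_piFinset]
          have h1 : ∀ j : Fin d, (if j = i then Finset.range (a i)
              else Finset.range q).card = if j = i then a i else q := by
            intro j; by_cases h : j = i <;> simp [h]
          rw [Finset.prod_congr rfl (fun j _ => h1 j),
            ← Finset.mul_prod_erase Finset.univ _ (Finset.mem_univ i), if_pos rfl]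
          have h2 : ∏ j ∈ Finset.univ.erase i, (if j = i then a i else q) = q ^ (d-1) := by
            rw [Finset.prod_congr rfl (fun j hj => if_neg (Finset.mem_erase.1 hj).1),
              Finset.prod_const, Finset.card_erase_of_mem (Finset.mem_univ i),
              Finset.card_univ, Fintype.card_fin]
          rw [h2]
        rw [← hcard]
        refine Finset.card_le_card_of_injOn (fun e => Finsupp.equivFunOnFinite e) ?_ ?_
        · intro e he
          obtain ⟨hbox, hia⟩ := Finset.mem_filter.1 he
          rw [Finset.mem_coe, Fintype.mem_piFinset]
          intro j
          by_cases h : j = i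
          · subst h; simp [hia]
          · simp [h, mem_box.1 hbox j]
        · exact (Finsupp.equivFunOnFinite.injective).injOn
      calc ((box d q).filter (fun e' => ¬ a ≤ e')).card
          ≤ (Finset.univ.biUnion (fun i : Fin d =>
              (box d q).filter (fun e => e i < a i))).card := Finset.card_le_card hsub
        _ ≤ ∑ i, ((box d q).filter (fun e => e i < a i)).card := Finset.card_biUnion_le
        _ ≤ ∑ i, a i * q ^ (d-1) := Finset.sum_le_sum (fun i _ => hbi i)
        _ = (∑ i, a i) * q ^ (d-1) := by rw [Finset.sum_mul]
        _ = D₀ * q ^ (d-1) := by rw [hdega]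
    · -- spanning
      intro gg
      have hunit : IsUnit (MvPowerSeries.coeff a f) := by
        rw [PadicInt.isUnit_iff]
        refine le_antisymm (PadicInt.norm_le_one _) (not_lt.1 fun hlt => ?_)
        exact hpa ((PadicInt.norm_lt_one_iff_dvd _).1 hlt)
      have hspan := spanning f q hq a hunit (hmin q hDq)
      set M := Submodule.span ℤ_[p] (Set.range
        fun s : {x : Fin d →₀ ℕ // x ∈ (box d q).filter (fun e' => ¬ a ≤ e')} =>
          (MvPowerSeries.monomial (s : Fin d →₀ ℕ)) (1 : ℤ_[p])) with hM
      set Jbig := Ideal.span {(p : MvPowerSeries (Fin d) ℤ_[p])} ⊔ Ideal.span {f} ⊔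
        Ideal.span (Set.range fun i : Fin d =>
          ((MvPowerSeries.X i : MvPowerSeries (Fin d) ℤ_[p]) ^ q)) with hJbig
      have hggmem : gg ∈ M ⊔ Jbig.restrictScalars ℤ_[p] := by
        have hdecomp : gg = (∑ e ∈ box d q,
            (MvPowerSeries.monomial e) (MvPowerSeries.coeff e gg))
            + (gg - ∑ e ∈ box d q,
            (MvPowerSeries.monomial e) (MvPowerSeries.coeff e gg)) := by ring
        rw [hdecomp]
        refine Submodule.add_mem _ (Submodule.sum_mem _ fun e he => ?_) ?_
        · have heq : (MvPowerSeries.monomial e) (MvPowerSeries.coeff e gg)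
              = (MvPowerSeries.coeff e gg) • (MvPowerSeries.monomial e) 1 := by
            rw [← map_smul, smul_eq_mul, mul_one]
          rw [heq]
          exact Submodule.smul_mem _ _ (hspan e (mem_box.1 he))
        · refine Submodule.mem_sup_right ((Submodule.restrictScalars_mem _ _ _).2 ?_)
          rw [hJbig]
          exact Ideal.mem_sup_right (sub_trunc_mem q gg)
      have hle : Jbig ≤ Ideal.span {(p : MvPowerSeries (Fin d) ℤ_[p])} ⊔ K := by
        rw [hJbig]
        refine sup_le (sup_le le_sup_left (le_trans hfK' le_sup_right)) hXK
      obtain ⟨m, hm, y, hy, hmy⟩ := Submodule.mem_sup.1 hggmem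
      refine ⟨m, hm, ?_⟩
      have : gg - m = y := by rw [← hmy]; ring
      rw [this]
      exact hle ((Submodule.restrictScalars_mem _ _ _).1 hy)
  · -- crude case
    refine ⟨box d q, ?_, ?_⟩
    · have h1 : d - 1 + 1 = d := by omega
      have : q ^ d = q ^ (d-1) * q := by rw [← pow_succ, h1]
      rw [card_box, this]
      calc q ^ (d-1) * q ≤ q ^ (d-1) * D₀ := Nat.mul_le_mul_left _ (by omega)
        _ = D₀ * q ^ (d-1) := by ring
    · intro gg
      refine ⟨∑ e ∈ box d q,
        (MvPowerSeries.monomial e) (MvPowerSeries.coeff e gg), ?_, ?_⟩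
      · refine Submodule.sum_mem _ fun e he => ?_
        have heq : (MvPowerSeries.monomial e) (MvPowerSeries.coeff e gg)
            = (MvPowerSeries.coeff e gg) • (MvPowerSeries.monomial e) 1 := by
          rw [← map_smul, smul_eq_mul, mul_one]
        rw [heq]
        exact Submodule.smul_mem _ _
          (Submodule.subset_span ⟨⟨e, he⟩, rfl⟩)
      · exact hXK (sub_trunc_mem q gg)

end Stmt17Aux

open Finset MvPowerSeries Stmt17Aux


set_option maxHeartbeats 1000000 in
/-- Let `p` be a prime, `d ≥ 1`, `Λ = ℤ_p[[X_1,…,X_d]]`, `I_n` the ideal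
generated by `(1+X_i)^{p^n} - 1`, and let `f ∈ Λ`, `f ∉ pΛ`.  If `N` is a `Λ`-module
admitting a surjection `(Λ/(f))^r → N`, then for every `ν ≥ 1` there is `C ≥ 0` such that
for all `n` the quotient `N/(p^ν N + I_n N)` is finite of cardinality at most
`p^{C·p^{n(d-1)}}`. -/
theorem stmt17 (p : ℕ) [Fact p.Prime] (d : ℕ) (hd : 1 ≤ d)
    (f : MvPowerSeries (Fin d) ℤ_[p])
    (hf : f ∉ Ideal.span {(p : MvPowerSeries (Fin d) ℤ_[p])})
    (r : ℕ) (hr : 1 ≤ r)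
    (N : Type*) [AddCommGroup N] [Module (MvPowerSeries (Fin d) ℤ_[p]) N]
    (hsurj : ∃ g : (Fin r → (MvPowerSeries (Fin d) ℤ_[p] ⧸ Ideal.span {f}))
        →ₗ[MvPowerSeries (Fin d) ℤ_[p]] N, Function.Surjective g)
    (ν : ℕ) (hν : 1 ≤ ν) :
    ∃ C : ℕ, ∀ n : ℕ,
      Finite (N ⧸ ((Ideal.span {(p : MvPowerSeries (Fin d) ℤ_[p]) ^ ν} ⊔
          Ideal.span (Set.range fun i : Fin d =>
            ((1 + MvPowerSeries.X i) ^ (p ^ n) - 1 : MvPowerSeries (Fin d) ℤ_[p]))) •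
          (⊤ : Submodule (MvPowerSeries (Fin d) ℤ_[p]) N))) ∧
      Nat.card (N ⧸ ((Ideal.span {(p : MvPowerSeries (Fin d) ℤ_[p]) ^ ν} ⊔
          Ideal.span (Set.range fun i : Fin d =>
            ((1 + MvPowerSeries.X i) ^ (p ^ n) - 1 : MvPowerSeries (Fin d) ℤ_[p]))) •
          (⊤ : Submodule (MvPowerSeries (Fin d) ℤ_[p]) N)))
        ≤ p ^ (C * p ^ (n * (d - 1))) := by
  classical
  obtain ⟨g, hg⟩ := hsurj
  obtain ⟨D₀, a, hpa, hdega, hmin⟩ := exists_min_exponent f hf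
  have hp2 : 2 ≤ p := (Fact.out : p.Prime).two_le
  refine ⟨ν * D₀ * r, ?_⟩
  intro n
  set q := p ^ n with hqdef
  have hq : 0 < q := pow_pos (by omega) n
  set In := Ideal.span (Set.range fun i : Fin d =>
    ((1 + MvPowerSeries.X i) ^ (p ^ n) - 1 : MvPowerSeries (Fin d) ℤ_[p])) with hIn
  set J' := Ideal.span {(p : MvPowerSeries (Fin d) ℤ_[p]) ^ ν} ⊔ In with hJ'
  set K := Ideal.span {f} ⊔ J' with hK
  have hfK : f ∈ K := Ideal.mem_sup_left (Ideal.subset_span rfl)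
  have hXK : Ideal.span (Set.range fun i : Fin d =>
      ((MvPowerSeries.X i : MvPowerSeries (Fin d) ℤ_[p]) ^ q)) ≤
      Ideal.span {(p : MvPowerSeries (Fin d) ℤ_[p])} ⊔ K := by
    rw [Ideal.span_le]
    rintro x ⟨i, rfl⟩
    have h0 := X_pow_mem (p := p) n i
    have hle : Ideal.span {(p : MvPowerSeries (Fin d) ℤ_[p])} ⊔ In ≤
        Ideal.span {(p : MvPowerSeries (Fin d) ℤ_[p])} ⊔ K := by
      refine sup_le_sup_left ?_ _
      rw [hK]
      exact le_trans (le_sup_right : In ≤ J') le_sup_right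
    exact hle h0
  obtain ⟨S, hScard, hSspan⟩ := main_spanning f D₀ a hpa hdega hmin hd q hq K hfK hXK
  have hstepK : ∀ gg : MvPowerSeries (Fin d) ℤ_[p],
      ∃ m ∈ Submodule.span ℤ_[p] (Set.range fun s : {x : Fin d →₀ ℕ // x ∈ S} =>
        (MvPowerSeries.monomial (s : Fin d →₀ ℕ)) (1 : ℤ_[p])), gg - m ∈ K := by
    intro gg
    obtain ⟨m, hm, hmem⟩ := bootstrap hSspan ν gg
    refine ⟨m, hm, ?_⟩
    have hsub : Ideal.span {(p : MvPowerSeries (Fin d) ℤ_[p]) ^ ν} ⊔ K ≤ K := by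
      refine sup_le ?_ le_rfl
      rw [hK]
      exact le_trans (le_sup_left : _ ≤ J') le_sup_right
    exact hsub hmem
  haveI : NeZero (p ^ ν) := ⟨pow_ne_zero _ (by omega)⟩
  set φ : (Fin r → ({x : Fin d →₀ ℕ // x ∈ S} → ZMod (p ^ ν))) → N ⧸ (J' • (⊤ : Submodule (MvPowerSeries (Fin d) ℤ_[p]) N)) :=
    fun c => Submodule.Quotient.mk (g (fun i => Ideal.Quotient.mk (Ideal.span {f})
      (∑ s : {x : Fin d →₀ ℕ // x ∈ S}, (((c i s).val : ℤ_[p])) •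
        (MvPowerSeries.monomial (s : Fin d →₀ ℕ)) (1 : ℤ_[p])))) with hφdef
  have hφ : Function.Surjective φ := by
    intro x
    obtain ⟨y, rfl⟩ := Submodule.Quotient.mk_surjective _ x
    obtain ⟨yv, rfl⟩ := hg y
    have hzex : ∀ i, ∃ z, Ideal.Quotient.mk (Ideal.span {f}) z = yv i :=
      fun i => Ideal.Quotient.mk_surjective (yv i)
    choose z hz using hzex
    have hms : ∀ i, ∃ cf : {x : Fin d →₀ ℕ // x ∈ S} → ℤ_[p],
        z i - (∑ s, cf s • (MvPowerSeries.monomial (s : Fin d →₀ ℕ)) (1 : ℤ_[p])) ∈ K := by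
      intro i
      obtain ⟨m, hm, hmem⟩ := hstepK (z i)
      rw [Submodule.mem_span_range_iff_exists_fun] at hm
      obtain ⟨cf, hcf⟩ := hm
      exact ⟨cf, by rw [hcf]; exact hmem⟩
    choose cf hcf using hms
    refine ⟨fun i s => PadicInt.toZModPow ν (cf i s), ?_⟩
    rw [hφdef]
    rw [Submodule.Quotient.eq, ← map_sub]
    set L : Fin r → MvPowerSeries (Fin d) ℤ_[p] := fun i =>
      ∑ s : {x : Fin d →₀ ℕ // x ∈ S},
        (((PadicInt.toZModPow ν (cf i s)).val : ℤ_[p])) •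
          (MvPowerSeries.monomial (s : Fin d →₀ ℕ)) (1 : ℤ_[p]) with hL
    have hwK : ∀ i, L i - z i ∈ K := by
      intro i
      have h1 : L i - (∑ s, cf i s • (MvPowerSeries.monomial (s : Fin d →₀ ℕ)) (1:ℤ_[p]))
          ∈ Ideal.span {(p : MvPowerSeries (Fin d) ℤ_[p]) ^ ν} := by
        have hrw : L i - (∑ s, cf i s • (MvPowerSeries.monomial (s : Fin d →₀ ℕ)) (1:ℤ_[p]))
            = ∑ s : {x : Fin d →₀ ℕ // x ∈ S},
              ((((PadicInt.toZModPow ν (cf i s)).val : ℤ_[p])) - cf i s) •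
                (MvPowerSeries.monomial (s : Fin d →₀ ℕ)) (1:ℤ_[p]) := by
          rw [hL, ← Finset.sum_sub_distrib]
          exact Finset.sum_congr rfl fun s _ => by rw [sub_smul]
        rw [hrw]
        refine Submodule.sum_mem _ fun s _ => ?_
        have hker : (((PadicInt.toZModPow ν (cf i s)).val : ℤ_[p])) - cf i s
            ∈ RingHom.ker (PadicInt.toZModPow (p := p) ν) := by
          rw [RingHom.mem_ker, map_sub, map_natCast, ZMod.natCast_rightInverse _, sub_self]
        rw [PadicInt.ker_toZModPow] at hker
        obtain ⟨t, ht⟩ := Ideal.mem_span_singleton.1 hker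
        rw [ht, mul_smul]
        refine Ideal.mem_span_singleton.2 ⟨t • (MvPowerSeries.monomial (s : Fin d →₀ ℕ)) (1:ℤ_[p]), ?_⟩
        rw [Algebra.smul_def, map_pow, map_natCast]
      have h2 := hcf i
      have hsub : Ideal.span {(p : MvPowerSeries (Fin d) ℤ_[p]) ^ ν} ≤ K := by
        rw [hK]
        exact le_trans (le_sup_left : _ ≤ J') le_sup_right
      have hrw2 : L i - z i
          = (L i - (∑ s, cf i s • (MvPowerSeries.monomial (s : Fin d →₀ ℕ)) (1:ℤ_[p])))
            - (z i - (∑ s, cf i s • (MvPowerSeries.monomial (s : Fin d →₀ ℕ)) (1:ℤ_[p]))) := by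
        ring
      rw [hrw2]
      exact Submodule.sub_mem _ (hsub h1) h2
    have hdec : ∀ i, ∃ u ∈ Ideal.span {f}, ∃ t ∈ J', u + t = L i - z i := by
      intro i
      exact Submodule.mem_sup.1 (by rw [hK] at hwK; exact hwK i)
    choose u hu t ht hut using hdec
    have harg : (fun i => Ideal.Quotient.mk (Ideal.span {f}) (L i)) - yv
        = ∑ i : Fin r, t i • (Pi.single i (Ideal.Quotient.mk (Ideal.span {f}) 1) :
          Fin r → MvPowerSeries (Fin d) ℤ_[p] ⧸ Ideal.span {f}) := by
      funext jj
      rw [Pi.sub_apply, ← hz jj, Finset.sum_apply]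
      rw [Finset.sum_eq_single jj]
      · rw [Pi.smul_apply, Pi.single_eq_same]
        have hsmul : t jj • (Ideal.Quotient.mk (Ideal.span {f}) (1 : MvPowerSeries (Fin d) ℤ_[p]))
            = Ideal.Quotient.mk (Ideal.span {f}) (t jj) := by
          rw [← Ideal.Quotient.mk_eq_mk, ← Ideal.Quotient.mk_eq_mk, ← Submodule.Quotient.mk_smul, smul_eq_mul, mul_one]
        rw [hsmul]
        rw [← RingHom.map_sub (Ideal.Quotient.mk (Ideal.span {f})) (L jj) (z jj), ← hut jj,
          RingHom.map_add (Ideal.Quotient.mk (Ideal.span {f})) (u jj) (t jj),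
          Ideal.Quotient.eq_zero_iff_mem.2 (hu jj), zero_add]
      · intro b _ hb
        rw [Pi.smul_apply, Pi.single_eq_of_ne (Ne.symm hb), smul_zero]
      · intro h
        exact absurd (Finset.mem_univ jj) h
    rw [harg, map_sum]
    refine Submodule.sum_mem _ fun i _ => ?_
    rw [map_smul]
    exact Submodule.smul_mem_smul (ht i) Submodule.mem_top
  constructor
  · exact Finite.of_surjective φ hφ
  · calc Nat.card (N ⧸ (J' • (⊤ : Submodule (MvPowerSeries (Fin d) ℤ_[p]) N)))
        ≤ Nat.card (Fin r → ({x : Fin d →₀ ℕ // x ∈ S} → ZMod (p ^ ν))) :=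
          Nat.card_le_card_of_surjective φ hφ
      _ = ((p ^ ν) ^ S.card) ^ r := by
          simp [Nat.card_pi, Nat.card_zmod, Finset.prod_const, Fintype.card_coe]
      _ ≤ p ^ (ν * D₀ * r * p ^ (n * (d - 1))) := by
          rw [← pow_mul, ← pow_mul]
          refine Nat.pow_le_pow_right (by omega) ?_
          have hqd : q ^ (d-1) = p ^ (n * (d-1)) := by rw [hqdef, ← pow_mul]
          calc ν * (S.card * r) = ν * S.card * r := by ring
            _ ≤ ν * (D₀ * q ^ (d-1)) * r :=
                Nat.mul_le_mul_right r (Nat.mul_le_mul_left ν hScard)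
            _ = ν * D₀ * r * (q ^ (d-1)) := by ring
            _ = ν * D₀ * r * p ^ (n * (d-1)) := by rw [hqd]
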